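/- Equivalent formulation of γ_ω: For any ω ∈ (0,∞), define I_ω(u) := S_ω(u) − ½K(u) = (ω/2)M(u) + ½‖∇_y u‖_{L²}² + (αd−4)/(4(α+2))·‖u‖_{L^{α+2}}^{α+2} and γ̄_ω := inf{I_ω(u): u ∈ H^1(ℝ^d×T^m)∖{0}, K(u) ≤ 0}. Then γ_ω = γ̄_ω. -/

import Mathlib

open MeasureTheory Real Filter Topology

noncomputable section

namespace NLS

/-- Points of `ℝ^d × ℝ^m`; functions that are `2π`-periodic in the second
variable model functions on the waveguide `ℝ^d × 𝕋^m`, `𝕋 = ℝ/2πℤ`. -/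
abbrev Pt (d m : ℕ) := (Fin d → ℝ) × (Fin m → ℝ)

/-- Fundamental domain `ℝ^d × [0,2π)^m`. -/
def fundDom (d m : ℕ) : Set (Pt d m) :=
  Set.univ ×ˢ Set.pi Set.univ fun _ => Set.Ico (0 : ℝ) (2 * π)

/-- The measure on the waveguide: Lebesgue measure restricted to a fundamental domain. -/
def μw (d m : ℕ) : Measure (Pt d m) := volume.restrict (fundDom d m)

/-- `2π`-periodicity in the torus variables. -/
def IsPeriodic {d m : ℕ} (u : Pt d m → ℂ) : Prop :=
  ∀ (p : Pt d m) (k : Fin m → ℤ), u (p.1, p.2 + fun i => 2 * π * (k i : ℝ)) = u p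

/-- The `i`-th partial derivative in the `x` variables. -/
def dX {d m : ℕ} (u : Pt d m → ℂ) (p : Pt d m) (i : Fin d) : ℂ :=
  fderiv ℝ u p (Pi.single i 1, 0)

/-- The `j`-th partial derivative in the `y` variables. -/
def dY {d m : ℕ} (u : Pt d m → ℂ) (p : Pt d m) (j : Fin m) : ℂ :=
  fderiv ℝ u p (0, Pi.single j 1)

/-- `‖∇ₓ u‖_{L²}²`. -/
def gradXsq (d m : ℕ) (u : Pt d m → ℂ) : ℝ :=
  ∫ p, (∑ i, ‖dX u p i‖ ^ 2) ∂(μw d m)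

/-- `‖∇_y u‖_{L²}²`. -/
def gradYsq (d m : ℕ) (u : Pt d m → ℂ) : ℝ :=
  ∫ p, (∑ j, ‖dY u p j‖ ^ 2) ∂(μw d m)

/-- The mass `M(u) = ‖u‖_{L²}²`. -/
def Mass (d m : ℕ) (u : Pt d m → ℂ) : ℝ :=
  ∫ p, ‖u p‖ ^ 2 ∂(μw d m)

/-- `‖u‖_{L^{α+2}}^{α+2}`. -/
def Pot (d m : ℕ) (α : ℝ) (u : Pt d m → ℂ) : ℝ :=
  ∫ p, ‖u p‖ ^ (α + 2) ∂(μw d m)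

/-- Membership in `H^1(ℝ^d×𝕋^m) ∩ L^{α+2}` (with a differentiable representative). -/
structure InH1 (d m : ℕ) (α : ℝ) (u : Pt d m → ℂ) : Prop where
  diff : Differentiable ℝ u
  periodic : IsPeriodic u
  memL2 : Integrable (fun p => ‖u p‖ ^ 2) (μw d m)
  memGradL2 : Integrable (fun p => ‖fderiv ℝ u p‖ ^ 2) (μw d m)
  memLp : Integrable (fun p => ‖u p‖ ^ (α + 2)) (μw d m)

/-- The energy `E(u)`. -/
def En (d m : ℕ) (α : ℝ) (u : Pt d m → ℂ) : ℝ :=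
  (gradXsq d m u + gradYsq d m u) / 2 - Pot d m α u / (α + 2)

/-- The action `S_ω(u) = E(u) + (ω/2) M(u)`. -/
def Sw (d m : ℕ) (α ω : ℝ) (u : Pt d m → ℂ) : ℝ :=
  En d m α u + ω / 2 * Mass d m u

/-- The virial functional `K(u)`. -/
def Kw (d m : ℕ) (α : ℝ) (u : Pt d m → ℂ) : ℝ :=
  gradXsq d m u - α * d / (2 * (α + 2)) * Pot d m α u

/-- The Nehari functional `N_ω(u)`. -/
def Nw (d m : ℕ) (α ω : ℝ) (u : Pt d m → ℂ) : ℝ :=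
  ω * Mass d m u + gradXsq d m u + gradYsq d m u - Pot d m α u

/-- Values of the action on the virial-vanishing constraint set. -/
def gammaSet (d m : ℕ) (α ω : ℝ) : Set ℝ :=
  Sw d m α ω '' {u | InH1 d m α u ∧ u ≠ 0 ∧ Kw d m α u = 0}

/-- `γ_ω = inf {S_ω(u) : u ∈ H¹∖{0}, K(u) = 0}`. -/
def gamma (d m : ℕ) (α ω : ℝ) : ℝ := sInf (gammaSet d m α ω)

/-- Values of the action on the Nehari constraint set. -/
def betaSet (d m : ℕ) (α ω : ℝ) : Set ℝ :=
  Sw d m α ω '' {u | InH1 d m α u ∧ u ≠ 0 ∧ Nw d m α ω u = 0}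

/-- `β_ω = inf {S_ω(u) : u ∈ H¹∖{0}, N_ω(u) = 0}`. -/
def beta (d m : ℕ) (α ω : ℝ) : ℝ := sInf (betaSet d m α ω)

/-- `m_c = inf {E(u) : u ∈ H¹, M(u) = c, K(u) = 0}`. -/
def mc (d m : ℕ) (α c : ℝ) : ℝ :=
  sInf (En d m α '' {u | InH1 d m α u ∧ Mass d m u = c ∧ Kw d m α u = 0})

/-- `u` is a minimizer for the problem `γ_ω`. -/
def IsGammaMin (d m : ℕ) (α ω : ℝ) (u : Pt d m → ℂ) : Prop :=
  InH1 d m α u ∧ u ≠ 0 ∧ Kw d m α u = 0 ∧ Sw d m α ω u = gamma d m α ω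

/-- `u` is a minimizer for the problem `β_ω`. -/
def IsBetaMin (d m : ℕ) (α ω : ℝ) (u : Pt d m → ℂ) : Prop :=
  InH1 d m α u ∧ u ≠ 0 ∧ Nw d m α ω u = 0 ∧ Sw d m α ω u = beta d m α ω

/-- `u` is a minimizer for the problem `m_c`. -/
def IsMcMin (d m : ℕ) (α c : ℝ) (u : Pt d m → ℂ) : Prop :=
  InH1 d m α u ∧ Mass d m u = c ∧ Kw d m α u = 0 ∧ En d m α u = mc d m α c

/-- Iterated directional derivative. -/
def d2 {d m : ℕ} (u : Pt d m → ℂ) (p v : Pt d m) : ℂ :=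
  fderiv ℝ (fun q => fderiv ℝ u q v) p v

/-- The Laplacian in the `x` variables. -/
def lapX {d m : ℕ} (u : Pt d m → ℂ) (p : Pt d m) : ℂ :=
  ∑ i, d2 u p (Pi.single i 1, 0)

/-- The Laplacian in the `y` variables. -/
def lapY {d m : ℕ} (u : Pt d m → ℂ) (p : Pt d m) : ℂ :=
  ∑ j, d2 u p (0, Pi.single j 1)

/-- The full Laplacian `Δ_{x,y}`. -/
def lap {d m : ℕ} (u : Pt d m → ℂ) (p : Pt d m) : ℂ := lapX u p + lapY u p

/-- `u` solves the stationary equation `-Δ_{x,y} u + ω u = |u|^α u`. -/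
def SolvesStat (d m : ℕ) (α ω : ℝ) (u : Pt d m → ℂ) : Prop :=
  ∀ p, -lap u p + (ω : ℂ) * u p = (↑(‖u p‖ ^ α) : ℂ) * u p

/-- `u` is (real-valued and) pointwise positive. -/
def IsPositive {d m : ℕ} (u : Pt d m → ℂ) : Prop :=
  ∀ p, 0 < (u p).re ∧ (u p).im = 0

/-- The mass-preserving scaling `v^t(x,y) = t^{d/2} u(tx, y)`. -/
def scaleX (d m : ℕ) (t : ℝ) (u : Pt d m → ℂ) : Pt d m → ℂ :=
  fun p => (↑(t ^ ((d : ℝ) / 2)) : ℂ) * u (t • p.1, p.2)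

/-- `Q` is the (radial, positive) ground state of `-Δ Q + Q = Q^{1+4/d}` on `ℝ^d`. -/
def IsGroundStateQ (d : ℕ) (Q : Pt d 0 → ℂ) : Prop :=
  InH1 d 0 (4 / (d : ℝ)) Q ∧ IsPositive Q ∧
  (∀ p q : Pt d 0, ∑ i, (p.1 i) ^ 2 = ∑ i, (q.1 i) ^ 2 → Q p = Q q) ∧
  SolvesStat d 0 (4 / (d : ℝ)) 1 Q

/-- The squared `H¹` norm. -/
def H1normSq (d m : ℕ) (u : Pt d m → ℂ) : ℝ :=
  Mass d m u + gradXsq d m u + gradYsq d m u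

/-- `u : ℝ → H¹` solves the focusing NLS `i∂_t u + Δ_{x,y} u = -|u|^α u` on
the time interval `I`. -/
def IsNLSSolutionOn (d m : ℕ) (α : ℝ) (I : Set ℝ) (u : ℝ → Pt d m → ℂ) : Prop :=
  (∀ t ∈ I, InH1 d m α (u t)) ∧
  ∀ t ∈ I, ∀ p, Complex.I * deriv (fun s => u s p) t + lap (u t) p
      = -((↑(‖u t p‖ ^ α) : ℂ) * u t p)

/-- `u` is a solution of the focusing NLS on the maximal (open, connected)
time interval `I ∋ 0`. -/
def IsMaximalNLSSolution (d m : ℕ) (α : ℝ) (I : Set ℝ) (u : ℝ → Pt d m → ℂ) : Prop :=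
  IsOpen I ∧ (0 : ℝ) ∈ I ∧ IsPreconnected I ∧ IsNLSSolutionOn d m α I u ∧
  ∀ (J : Set ℝ) (v : ℝ → Pt d m → ℂ), IsOpen J → IsPreconnected J → I ⊆ J →
    IsNLSSolutionOn d m α J v → (∀ t ∈ I, v t = u t) → J = I

/-- `v` is a global solution of the linear Schrödinger equation
`i∂_t v + Δ_{x,y} v = 0` (so that `v t = e^{itΔ} (v 0)`). -/
def IsLinearSolution (d m : ℕ) (v : ℝ → Pt d m → ℂ) : Prop :=
  ∀ t p, Complex.I * deriv (fun s => v s p) t + lap (v t) p = 0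

end NLS

namespace NLS

/-- The functional `I_ω(u) = S_ω(u) - K(u)/2`. -/
def Iw (d m : ℕ) (α ω : ℝ) (u : Pt d m → ℂ) : ℝ :=
  Sw d m α ω u - Kw d m α u / 2


section Aux

variable {d m : ℕ}

lemma mass_nonneg (u : Pt d m → ℂ) : 0 ≤ Mass d m u :=
  integral_nonneg fun p => by positivity

lemma pot_nonneg (α : ℝ) (u : Pt d m → ℂ) : 0 ≤ Pot d m α u :=
  integral_nonneg fun p => by positivity

lemma gradXsq_nonneg (u : Pt d m → ℂ) : 0 ≤ gradXsq d m u :=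
  integral_nonneg fun p => Finset.sum_nonneg fun i _ => by positivity

lemma gradYsq_nonneg (u : Pt d m → ℂ) : 0 ≤ gradYsq d m u :=
  integral_nonneg fun p => Finset.sum_nonneg fun i _ => by positivity

lemma fundDom_meas : MeasurableSet (fundDom d m) :=
  MeasurableSet.prod MeasurableSet.univ (MeasurableSet.univ_pi fun _ => measurableSet_Ico)

lemma eq_zero_of_ae_zero (hm : m ≤ 1) (u : Pt d m → ℂ) (hdiff : Differentiable ℝ u)
    (hper : IsPeriodic u) (h : ∀ᵐ p ∂(μw d m), u p = 0) : u = 0 := by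
  have hcont : Continuous u := hdiff.continuous
  have h' : ∀ᵐ p : Pt d m ∂volume, p ∈ fundDom d m → u p = 0 := by
    rwa [μw, ae_restrict_iff' fundDom_meas] at h
  have h2π : (0:ℝ) < 2 * π := by positivity
  -- u vanishes on the open core
  have hzeroO : ∀ p : Pt d m, (∀ i, p.2 i ∈ Set.Ioo (0:ℝ) (2*π)) → u p = 0 := by
    by_contra hc
    push_neg at hc
    obtain ⟨q, hqO, hq⟩ := hc
    set O : Set (Pt d m) := {p | ∀ i, p.2 i ∈ Set.Ioo (0:ℝ) (2*π)} with hO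
    have hOopen : IsOpen O := by
      have : O = ⋂ i, {p : Pt d m | p.2 i ∈ Set.Ioo (0:ℝ) (2*π)} := by
        ext p; simp [hO]
      rw [this]
      exact isOpen_iInter_of_finite fun i =>
        isOpen_Ioo.preimage ((continuous_apply i).comp continuous_snd)
    set V := O ∩ u ⁻¹' {0}ᶜ with hV
    have hVopen : IsOpen V := hOopen.inter (isOpen_compl_singleton.preimage hcont)
    have hVne : V.Nonempty := ⟨q, hqO, hq⟩
    have hpos : 0 < volume V := hVopen.measure_pos volume hVne
    have hnull : volume V = 0 := by
      refine measure_mono_null ?_ (ae_iff.mp h')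
      intro p hp
      simp only [Set.mem_setOf_eq, Classical.not_imp]
      refine ⟨⟨Set.mem_univ _, fun i _ => Set.Ioo_subset_Ico_self (hp.1 i)⟩, ?_⟩
      simpa using hp.2
    exact absurd hnull hpos.ne'
  -- u vanishes on the fundamental domain
  have hzeroF : ∀ p : Pt d m, (∀ i, p.2 i ∈ Set.Ico (0:ℝ) (2*π)) → u p = 0 := by
    intro p hp
    rcases Nat.le_one_iff_eq_zero_or_eq_one.mp hm with rfl | rfl
    · exact hzeroO p fun i => i.elim0
    · set g : ℝ → ℂ := fun t => u (p.1, fun _ => p.2 0 + t) with hg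
      have hgc : Continuous g := by
        apply hcont.comp
        exact continuous_const.prodMk (continuous_pi fun _ => continuous_const.add continuous_id)
      set ε : ℝ := 2 * π - p.2 0 with hε
      have hεpos : 0 < ε := by
        have := (hp 0).2; simp only [hε]; linarith
      have hgt : ∀ t ∈ Set.Ioo (0:ℝ) ε, g t = 0 := by
        intro t ht
        apply hzeroO
        intro i
        have h0 := (hp 0).1
        exact ⟨by simpa using by linarith [ht.1], by simpa using by linarith [ht.2]⟩
      have hg0 : g 0 = u p := by
        simp only [hg]
        congr 1
        refine Prod.ext rfl ?_
        funext i
        have : i = 0 := Subsingleton.elim i 0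
        rw [this]; ring
      have h1 : Filter.Tendsto g (nhdsWithin 0 (Set.Ioi 0)) (nhds (g 0)) :=
        (hgc.tendsto 0).mono_left nhdsWithin_le_nhds
      have h2 : Filter.Tendsto g (nhdsWithin 0 (Set.Ioi 0)) (nhds 0) := by
        refine Filter.Tendsto.congr' ?_ tendsto_const_nhds
        filter_upwards [Ioo_mem_nhdsGT_of_mem ⟨le_refl (0:ℝ), hεpos⟩] with t ht
        exact (hgt t ht).symm
      rw [← hg0, tendsto_nhds_unique h1 h2]
  -- conclude by periodicity
  funext p
  set k : Fin m → ℤ := fun i => ⌊p.2 i / (2*π)⌋ with hk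
  set r : Fin m → ℝ := fun i => p.2 i - 2*π*(k i) with hr
  have hrm : ∀ i, r i ∈ Set.Ico (0:ℝ) (2*π) := by
    intro i
    have hq : p.2 i = p.2 i / (2*π) * (2*π) := (div_mul_cancel₀ _ h2π.ne').symm
    have h1 := Int.floor_le (p.2 i / (2*π))
    have h2 := Int.lt_floor_add_one (p.2 i / (2*π))
    constructor
    · simp only [hr, hk]; nlinarith
    · simp only [hr, hk]; nlinarith
  have hur : u (p.1, r) = 0 := hzeroF (p.1, r) hrm
  have hst := hper (p.1, r) k
  have hy : (r + fun i => 2*π*((k i : ℤ) : ℝ)) = p.2 := by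
    funext i; simp only [Pi.add_apply, hr]; ring
  rw [hy] at hst
  calc u p = u (p.1, p.2) := by rw [Prod.mk.eta]
  _ = u (p.1, r) := hst
  _ = 0 := hur

end Aux

section Aux2
variable {d m : ℕ}

lemma mass_pos (hm : m ≤ 1) {α : ℝ} (u : Pt d m → ℂ) (hu : InH1 d m α u) (hne : u ≠ 0) :
    0 < Mass d m u := by
  rcases lt_or_eq_of_le (mass_nonneg u) with h | h
  · exact h
  exfalso
  apply hne
  apply eq_zero_of_ae_zero hm u hu.diff hu.periodic
  have h0 : (fun p => ‖u p‖ ^ 2) =ᵐ[μw d m] 0 := by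
    rw [← MeasureTheory.integral_eq_zero_iff_of_nonneg (fun p => by positivity) hu.memL2]
    exact h.symm
  filter_upwards [h0] with p hp
  have : ‖u p‖ ^ 2 = 0 := hp
  have : ‖u p‖ = 0 := by nlinarith [norm_nonneg (u p)]
  simpa using this

lemma Sw_eq_Iw_add (α ω : ℝ) (u : Pt d m → ℂ) :
    Sw d m α ω u = Iw d m α ω u + Kw d m α u / 2 := by
  unfold Iw; ring

lemma Iw_eq {α : ℝ} (hα2 : α + 2 ≠ 0) (ω : ℝ) (u : Pt d m → ℂ) :
    Iw d m α ω u = ω / 2 * Mass d m u + gradYsq d m u / 2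
      + (α * d - 4) / (4 * (α + 2)) * Pot d m α u := by
  unfold Iw Sw En Kw
  field_simp
  ring

end Aux2

section Scale
variable {d m : ℕ}

lemma fderiv_cmul (u : Pt d m → ℂ) (hu : Differentiable ℝ u) (c : ℂ) (p : Pt d m) :
    fderiv ℝ (fun q => c * u q) p = c • fderiv ℝ u p := fderiv_const_mul (hu p) c

lemma inH1_cmul {α : ℝ} (u : Pt d m → ℂ) (hu : InH1 d m α u) (c : ℝ) :
    InH1 d m α (fun p => (c:ℂ) * u p) := by
  refine ⟨hu.diff.const_mul _, ?_, ?_, ?_, ?_⟩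
  · intro p k; simp only []; rw [hu.periodic p k]
  · have : (fun p => ‖(c:ℂ) * u p‖ ^ 2) = fun p => c^2 * ‖u p‖ ^ 2 := by
      funext p
      rw [norm_mul, Complex.norm_real, mul_pow, Real.norm_eq_abs, sq_abs]
    rw [this]; exact hu.memL2.const_mul _
  · have : (fun p => ‖fderiv ℝ (fun q => (c:ℂ) * u q) p‖ ^ 2)
        = fun p => c^2 * ‖fderiv ℝ u p‖ ^ 2 := by
      funext p
      rw [fderiv_cmul u hu.diff c p]
      rw [norm_smul ((c:ℝ):ℂ) (fderiv ℝ u p), Complex.norm_real, mul_pow, Real.norm_eq_abs, sq_abs]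
    rw [this]; exact hu.memGradL2.const_mul _
  · have : (fun p => ‖(c:ℂ) * u p‖ ^ (α+2)) = fun p => |c|^(α+2) * ‖u p‖ ^ (α+2) := by
      funext p
      rw [norm_mul, Complex.norm_real, Real.norm_eq_abs,
        Real.mul_rpow (abs_nonneg c) (norm_nonneg _)]
    rw [this]; exact hu.memLp.const_mul _

lemma mass_cmul (u : Pt d m → ℂ) {c : ℝ} (hc : 0 ≤ c) :
    Mass d m (fun p => (c:ℂ) * u p) = c^2 * Mass d m u := by
  unfold Mass
  rw [← MeasureTheory.integral_const_mul]
  congr 1; funext p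
  rw [norm_mul, Complex.norm_real, mul_pow, Real.norm_eq_abs, sq_abs]

lemma pot_cmul (α : ℝ) (u : Pt d m → ℂ) {c : ℝ} (hc : 0 ≤ c) :
    Pot d m α (fun p => (c:ℂ) * u p) = c^(α+2) * Pot d m α u := by
  unfold Pot
  rw [← MeasureTheory.integral_const_mul]
  congr 1; funext p
  rw [norm_mul, Complex.norm_real, Real.norm_eq_abs,
    Real.mul_rpow (abs_nonneg c) (norm_nonneg _), abs_of_nonneg hc]

lemma gradXsq_cmul (u : Pt d m → ℂ) (hu : Differentiable ℝ u) (c : ℝ) :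
    gradXsq d m (fun p => (c:ℂ) * u p) = c^2 * gradXsq d m u := by
  unfold gradXsq
  rw [← MeasureTheory.integral_const_mul]
  congr 1; funext p
  rw [Finset.mul_sum]
  congr 1; funext i
  unfold dX
  rw [fderiv_cmul u hu c p, ContinuousLinearMap.smul_apply]
  rw [show ((c:ℂ) • fderiv ℝ u p (Pi.single i 1, 0)) = (c:ℂ) * fderiv ℝ u p (Pi.single i 1, 0)
    from rfl]
  rw [norm_mul, Complex.norm_real, mul_pow, Real.norm_eq_abs, sq_abs]

lemma gradYsq_cmul (u : Pt d m → ℂ) (hu : Differentiable ℝ u) (c : ℝ) :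
    gradYsq d m (fun p => (c:ℂ) * u p) = c^2 * gradYsq d m u := by
  unfold gradYsq
  rw [← MeasureTheory.integral_const_mul]
  congr 1; funext p
  rw [Finset.mul_sum]
  congr 1; funext j
  unfold dY
  rw [fderiv_cmul u hu c p, ContinuousLinearMap.smul_apply]
  rw [show ((c:ℂ) • fderiv ℝ u p (0, Pi.single j 1)) = (c:ℂ) * fderiv ℝ u p (0, Pi.single j 1)
    from rfl]
  rw [norm_mul, Complex.norm_real, mul_pow, Real.norm_eq_abs, sq_abs]

end Scale

section Main
variable {d m : ℕ}

private lemma sq_add_le (x y z : ℝ) (hx : 0 ≤ x) (hy : 0 ≤ y) (hz : 0 ≤ z) (h : x ≤ y + z) :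
    x ^ 2 ≤ 2 * y ^ 2 + 2 * z ^ 2 := by
  nlinarith [sq_nonneg (y - z), mul_self_le_mul_self hx h]

lemma gradXsq_integrand_integrable {α : ℝ} (u : Pt d m → ℂ) (hu : InH1 d m α u) :
    Integrable (fun p => ∑ i, ‖dX u p i‖ ^ 2) (μw d m) := by
  refine Integrable.mono' (hu.memGradL2.const_mul (d:ℝ)) ?_ ?_
  · exact Finset.aestronglyMeasurable_fun_sum _ fun i _ =>
      (((ContinuousLinearMap.apply ℝ ℂ _).continuous.measurable.comp
        (measurable_fderiv ℝ u)).norm.pow_const 2).aestronglyMeasurable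
  · refine Filter.Eventually.of_forall fun p => ?_
    have hb : ∀ i : Fin d, ‖dX u p i‖ ≤ ‖fderiv ℝ u p‖ := by
      intro i
      have h1 := (fderiv ℝ u p).le_opNorm ((Pi.single i 1 : Fin d → ℝ), (0 : Fin m → ℝ))
      have hn : ‖((Pi.single i 1 : Fin d → ℝ), (0 : Fin m → ℝ))‖ ≤ 1 := by
        rw [Prod.norm_def]
        simp [Pi.norm_single]
      calc ‖dX u p i‖ ≤ ‖fderiv ℝ u p‖ * ‖((Pi.single i 1 : Fin d → ℝ), (0 : Fin m → ℝ))‖ := h1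
      _ ≤ ‖fderiv ℝ u p‖ * 1 := by
          exact mul_le_mul_of_nonneg_left hn (norm_nonneg _)
      _ = ‖fderiv ℝ u p‖ := mul_one _
    have hnn : (0:ℝ) ≤ ∑ i, ‖dX u p i‖ ^ 2 := Finset.sum_nonneg fun i _ => by positivity
    rw [Real.norm_eq_abs, abs_of_nonneg hnn]
    calc ∑ i, ‖dX u p i‖ ^ 2 ≤ ∑ _i : Fin d, ‖fderiv ℝ u p‖ ^ 2 :=
      Finset.sum_le_sum fun i _ => pow_le_pow_left₀ (norm_nonneg _) (hb i) 2
    _ = (d:ℝ) * ‖fderiv ℝ u p‖ ^ 2 := by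
        rw [Finset.sum_const, Finset.card_univ, Fintype.card_fin, nsmul_eq_mul]

lemma mod_lemma (hd : 1 ≤ d) {α : ℝ} (u : Pt d m → ℂ) (hu : InH1 d m α u) (ξ : ℝ)
    (hξ0 : 0 ≤ ξ) (hdX0 : ∀ᵐ p ∂(μw d m), ∀ i, dX u p i = 0) :
    ∃ w : Pt d m → ℂ, InH1 d m α w ∧ (∀ p, u p ≠ 0 → w p ≠ 0) ∧
      Mass d m w = Mass d m u ∧ Pot d m α w = Pot d m α u ∧
      gradYsq d m w = gradYsq d m u ∧ gradXsq d m w = ξ ^ 2 * Mass d m u := by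
  classical
  set i0 : Fin d := ⟨0, hd⟩ with hi0
  set L : Pt d m →L[ℝ] ℝ :=
    (ContinuousLinearMap.proj i0).comp
      (ContinuousLinearMap.fst ℝ (Fin d → ℝ) (Fin m → ℝ)) with hLdef
  set G : Pt d m →L[ℝ] ℂ := L.smulRight (Complex.I * ξ) with hGdef
  set e : Pt d m → ℂ := fun p => Complex.exp (G p) with hedef
  have hGapp : ∀ v : Pt d m, G v = ((v.1 i0 : ℝ) : ℂ) * (Complex.I * ξ) := by
    intro v
    rw [hGdef, ContinuousLinearMap.smulRight_apply, hLdef]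
    simp [Complex.real_smul]
  have hee : ∀ p, ‖e p‖ = 1 := by
    intro p
    have hGp : G p = Complex.I * ((p.1 i0 * ξ : ℝ) : ℂ) := by
      rw [hGapp]; push_cast; ring
    rw [hedef]
    simp only [hGp]
    rw [Complex.norm_exp]
    simp
  have heD : ∀ p, HasFDerivAt e (e p • G) p := fun p => G.hasFDerivAt.cexp
  have hwD : ∀ p, HasFDerivAt (fun q => e q * u q)
      (e p • fderiv ℝ u p + u p • (e p • G)) p :=
    fun p => (heD p).mul ((hu.diff p).hasFDerivAt)
  have hwf : ∀ p, fderiv ℝ (fun q => e q * u q) p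
      = e p • fderiv ℝ u p + u p • (e p • G) := fun p => (hwD p).fderiv
  have np : ∀ p, ‖e p * u p‖ = ‖u p‖ := by
    intro p; rw [norm_mul, hee, one_mul]
  have heper : ∀ (p : Pt d m) (z : Fin m → ℝ), e (p.1, z) = e p := by
    intro p z
    show Complex.exp (G (p.1, z)) = Complex.exp (G p)
    rw [hGapp, hGapp]
  have hYeq : ∀ (p : Pt d m) (j : Fin m),
      ‖(fderiv ℝ (fun q => e q * u q) p) ((0 : Fin d → ℝ), Pi.single j 1)‖
        = ‖(fderiv ℝ u p) ((0 : Fin d → ℝ), Pi.single j 1)‖ := by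
    intro p j
    rw [hwf p]
    have h0 : G ((0 : Fin d → ℝ), Pi.single j 1) = 0 := by
      rw [hGapp]; simp
    simp only [ContinuousLinearMap.add_apply, ContinuousLinearMap.smul_apply]
    rw [h0]
    simp only [smul_eq_mul, smul_zero, mul_zero, add_zero]
    rw [norm_mul, hee, one_mul]
  have hGnorm : ∀ p, ‖u p • (e p • G)‖ ≤ ‖u p‖ * ‖G‖ := by
    intro p
    rw [norm_smul (u p) (e p • G), norm_smul (e p) G, hee, one_mul]
  refine ⟨fun p => e p * u p, ⟨fun p => (hwD p).differentiableAt, ?_, ?_, ?_, ?_⟩,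
    ?_, ?_, ?_, ?_, ?_⟩
  · -- periodic
    intro p k
    show e ((p.1, p.2 + fun i => 2*π*(k i : ℝ)).1, (p.1, p.2 + fun i => 2*π*(k i : ℝ)).2)
        * u (p.1, p.2 + fun i => 2*π*(k i : ℝ)) = e p * u p
    rw [hu.periodic p k]
    congr 1

  · -- memL2
    have : (fun p => ‖e p * u p‖ ^ 2) = fun p => ‖u p‖ ^ 2 := by
      funext p; rw [np]
    rw [this]; exact hu.memL2
  · -- memGradL2
    refine Integrable.mono' ((hu.memGradL2.const_mul 2).add (hu.memL2.const_mul (2 * ‖G‖^2)))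
      ?_ ?_
    · exact ((measurable_fderiv ℝ _).norm.pow_const 2).aestronglyMeasurable
    · refine Filter.Eventually.of_forall fun p => ?_
      have hb : ‖fderiv ℝ (fun q => e q * u q) p‖ ≤ ‖fderiv ℝ u p‖ + ‖u p‖ * ‖G‖ := by
        rw [hwf p]
        refine le_trans (norm_add_le _ _) ?_
        have h1 : ‖e p • fderiv ℝ u p‖ = ‖fderiv ℝ u p‖ := by
          rw [norm_smul (e p) (fderiv ℝ u p), hee, one_mul]
        rw [h1]
        exact add_le_add le_rfl (hGnorm p)
      have hnn : (0:ℝ) ≤ ‖fderiv ℝ (fun q => e q * u q) p‖ ^ 2 := by positivity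
      rw [Real.norm_eq_abs, abs_of_nonneg hnn]
      simp only [Pi.add_apply]
      have hkey := sq_add_le _ _ _ (norm_nonneg (fderiv ℝ (fun q => e q * u q) p))
        (norm_nonneg (fderiv ℝ u p))
        (mul_nonneg (norm_nonneg (u p)) (norm_nonneg G)) hb
      have h2 : 2 * (‖u p‖ * ‖G‖) ^ 2 = 2 * ‖G‖ ^ 2 * ‖u p‖ ^ 2 := by ring
      linarith
  · -- memLp
    have : (fun p => ‖e p * u p‖ ^ (α+2)) = fun p => ‖u p‖ ^ (α+2) := by
      funext p; rw [np]
    rw [this]; exact hu.memLp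
  · -- pointwise nonvanishing
    intro p hp
    exact mul_ne_zero (Complex.exp_ne_zero _) hp
  · -- Mass
    unfold Mass; congr 1; funext p; rw [np]
  · -- Pot
    unfold Pot; congr 1; funext p; rw [np]
  · -- gradYsq
    unfold gradYsq; congr 1; funext p; congr 1; funext j
    unfold dY; rw [hYeq p j]
  · -- gradXsq
    unfold gradXsq
    have hRHS : ξ ^ 2 * Mass d m u = ∫ p, ξ ^ 2 * ‖u p‖ ^ 2 ∂(μw d m) := by
      rw [MeasureTheory.integral_const_mul]; rfl
    rw [hRHS]
    apply integral_congr_ae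
    filter_upwards [hdX0] with p hp
    have hterm : ∀ i : Fin d, ‖dX (fun q => e q * u q) p i‖ ^ 2
        = if i = i0 then ξ ^ 2 * ‖u p‖ ^ 2 else 0 := by
      intro i
      show ‖(fderiv ℝ (fun q => e q * u q) p) (Pi.single i 1, (0 : Fin m → ℝ))‖ ^ 2 = _
      rw [hwf p]
      simp only [ContinuousLinearMap.add_apply, ContinuousLinearMap.smul_apply]
      have hdx : (fderiv ℝ u p) (Pi.single i 1, (0 : Fin m → ℝ)) = 0 := hp i
      rw [hdx, smul_zero, zero_add]
      have hGv : G (Pi.single i 1, (0 : Fin m → ℝ))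
          = (((if i0 = i then (1:ℝ) else 0) : ℝ) : ℂ) * (Complex.I * ξ) := by
        rw [hGapp]
        congr 2
        exact Pi.single_apply i 1 i0
      rw [hGv]
      by_cases hii : i = i0
      · subst hii
        simp only [eq_self_iff_true, if_true, Complex.ofReal_one, one_mul, smul_eq_mul]
        rw [norm_mul, norm_mul, hee, one_mul, norm_mul, Complex.norm_I, one_mul,
          Complex.norm_real, Real.norm_eq_abs, abs_of_nonneg hξ0]
        ring
      · have h1 : (if i0 = i then (1:ℝ) else 0) = 0 := by
          rw [if_neg (fun h => hii h.symm)]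
        rw [h1]
        simp [hii]
    calc ∑ i, ‖dX (fun q => e q * u q) p i‖ ^ 2
        = ∑ i : Fin d, if i = i0 then ξ ^ 2 * ‖u p‖ ^ 2 else 0 :=
          Finset.sum_congr rfl fun i _ => hterm i
      _ = ξ ^ 2 * ‖u p‖ ^ 2 := by
          rw [Finset.sum_ite_eq' Finset.univ i0 (fun _ => ξ ^ 2 * ‖u p‖ ^ 2)]
          simp

lemma exists_K_zero (hd : 1 ≤ d) (hm : m ≤ 1) {α ω : ℝ} (hα₁ : 4 / (d : ℝ) ≤ α)
    (hω : 0 < ω) (u : Pt d m → ℂ) (hu : InH1 d m α u) (hne : u ≠ 0)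
    (hK : Kw d m α u ≤ 0) :
    ∃ w, InH1 d m α w ∧ w ≠ 0 ∧ Kw d m α w = 0 ∧ Sw d m α ω w ≤ Iw d m α ω u := by
  have hdR : (0:ℝ) < d := by exact_mod_cast Nat.lt_of_lt_of_le Nat.zero_lt_one hd
  have hα0 : 0 < α := lt_of_lt_of_le (div_pos (by norm_num) hdR) hα₁
  have hα2 : (0:ℝ) < α + 2 := by linarith
  have hαd4 : (4:ℝ) ≤ α * d := by
    rw [div_le_iff₀ hdR] at hα₁; linarith
  have hc' : 0 ≤ (α * d - 4) / (4 * (α + 2)) := div_nonneg (by linarith) (by positivity)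
  have hcoeff : 0 < α * ↑d / (2 * (α + 2)) := by positivity
  rcases eq_or_lt_of_le hK with hK0 | hKneg
  · exact ⟨u, hu, hne, hK0, le_of_eq (by rw [Sw_eq_Iw_add, hK0]; ring)⟩
  set A := gradXsq d m u with hA
  set B := α * ↑d / (2 * (α + 2)) * Pot d m α u with hB
  have hKAB : Kw d m α u = A - B := rfl
  have hAB : A < B := by rw [hKAB] at hKneg; linarith
  have hA0 : 0 ≤ A := gradXsq_nonneg u
  have hBpos : 0 < B := lt_of_le_of_lt hA0 hAB
  have hPot : 0 < Pot d m α u := by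
    by_contra hc
    push_neg at hc
    have : B ≤ 0 := mul_nonpos_of_nonneg_of_nonpos (le_of_lt hcoeff) hc
    linarith
  have hM0 : 0 ≤ Mass d m u := mass_nonneg u
  have hY0 : 0 ≤ gradYsq d m u := gradYsq_nonneg u
  rcases eq_or_lt_of_le hA0 with hAzero | hApos
  · -- gradXsq u = 0 : modulation construction
    have hM : 0 < Mass d m u := mass_pos hm u hu hne
    have hF0 : (fun p => ∑ i, ‖dX u p i‖ ^ 2) =ᵐ[μw d m] 0 := by
      rw [← MeasureTheory.integral_eq_zero_iff_of_nonneg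
        (fun p => Finset.sum_nonneg fun i _ => by positivity)
        (gradXsq_integrand_integrable u hu)]
      exact hAzero.symm
    have hdX0 : ∀ᵐ p ∂(μw d m), ∀ i, dX u p i = 0 := by
      filter_upwards [hF0] with p hp
      intro i
      have hp' : ∑ i, ‖dX u p i‖ ^ 2 = 0 := hp
      have h1 := (Finset.sum_eq_zero_iff_of_nonneg
        (fun j _ => by positivity)).mp hp' i (Finset.mem_univ i)
      have h2 : ‖dX u p i‖ = 0 := by
        nlinarith [norm_nonneg (dX u p i)]
      simpa using h2
    obtain ⟨ξ, hξ0, hξ2⟩ : ∃ ξ : ℝ, 0 ≤ ξ ∧ ξ ^ 2 = B / Mass d m u :=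
      ⟨Real.sqrt (B / Mass d m u), Real.sqrt_nonneg _,
        Real.sq_sqrt (le_of_lt (div_pos hBpos hM))⟩
    obtain ⟨w, hwH1, hwnz, hwM, hwP, hwY, hwX⟩ := mod_lemma hd u hu ξ hξ0 hdX0
    have hwne : w ≠ 0 := by
      intro h0
      apply hne
      funext q
      by_contra hq
      exact hwnz q hq (by rw [h0]; rfl)
    have hKw : Kw d m α w = 0 := by
      unfold Kw
      rw [hwX, hwP, hξ2, div_mul_cancel₀ _ hM.ne', hB]
      exact sub_self _
    refine ⟨w, hwH1, hwne, hKw, ?_⟩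
    rw [Sw_eq_Iw_add, hKw, Iw_eq hα2.ne' ω w, Iw_eq hα2.ne' ω u, hwM, hwP, hwY]
    simp
  · -- gradXsq u > 0 : scaling construction
    have hABpos : 0 < A / B := div_pos hApos hBpos
    obtain ⟨lam, hlam0, hlam1, hlamα⟩ : ∃ l : ℝ, 0 < l ∧ l ≤ 1 ∧ l ^ α = A / B := by
      refine ⟨(A / B) ^ (1/α), Real.rpow_pos_of_pos hABpos _, ?_, ?_⟩
      · exact Real.rpow_le_one (le_of_lt hABpos)
          (le_of_lt ((div_lt_one hBpos).mpr hAB)) (by positivity)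
      · rw [← Real.rpow_mul (le_of_lt hABpos), one_div_mul_cancel hα0.ne', Real.rpow_one]
    set w : Pt d m → ℂ := fun p => ((lam:ℝ):ℂ) * u p with hw
    have hwH1 : InH1 d m α w := inH1_cmul u hu lam
    have hwne : w ≠ 0 := by
      intro h0
      apply hne
      funext q
      have := congrFun h0 q
      simp only [hw, Pi.zero_apply, mul_eq_zero] at this
      rcases this with h | h
      · exfalso; exact hlam0.ne' (by exact_mod_cast h)
      · simpa using h
    have hrp2 : lam ^ ((2:ℝ)) = lam ^ (2:ℕ) := Real.rpow_two lam
    have hlamα2 : lam ^ (α + 2) = (A / B) * lam ^ (2:ℕ) := by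
      rw [Real.rpow_add hlam0, hlamα, hrp2]
    have hKw : Kw d m α w = 0 := by
      have hPne : Pot d m α u ≠ 0 := hPot.ne'
      have hα2ne : α + 2 ≠ 0 := hα2.ne'
      unfold Kw
      rw [hw, gradXsq_cmul u hu.diff lam, pot_cmul α u (le_of_lt hlam0), hlamα2, hB, hA]
      field_simp
      ring
    have hlam2le : lam ^ (2:ℕ) ≤ 1 := pow_le_one₀ (le_of_lt hlam0) hlam1
    have hlamα2le : lam ^ (α + 2) ≤ 1 :=
      Real.rpow_le_one (le_of_lt hlam0) hlam1 (by positivity)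
    refine ⟨w, hwH1, hwne, hKw, ?_⟩
    rw [Sw_eq_Iw_add, hKw, Iw_eq hα2.ne' ω w, Iw_eq hα2.ne' ω u, hw,
      mass_cmul u (le_of_lt hlam0), pot_cmul α u (le_of_lt hlam0),
      gradYsq_cmul u hu.diff lam]
    have h1 : ω / 2 * (lam ^ (2:ℕ) * Mass d m u) ≤ ω / 2 * Mass d m u :=
      mul_le_mul_of_nonneg_left (mul_le_of_le_one_left hM0 hlam2le) (by positivity)
    have h2 : lam ^ (2:ℕ) * gradYsq d m u / 2 ≤ gradYsq d m u / 2 := by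
      linarith [mul_le_of_le_one_left hY0 hlam2le]
    have h3 : (α * ↑d - 4) / (4 * (α + 2)) * (lam ^ (α + 2) * Pot d m α u)
        ≤ (α * ↑d - 4) / (4 * (α + 2)) * Pot d m α u :=
      mul_le_mul_of_nonneg_left (mul_le_of_le_one_left (le_of_lt hPot) hlamα2le) hc'
    linarith

end Main

/-- equivalent formulation of `γ_ω`: with
`I_ω(u) = S_ω(u) - K(u)/2 = (ω/2)M(u) + ½‖∇_y u‖₂² + (αd-4)/(4(α+2)) ‖u‖_{α+2}^{α+2}`,
one has `γ_ω = γ̄_ω := inf {I_ω(u) : u ∈ H¹∖{0}, K(u) ≤ 0}`. -/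
theorem gamma_eq_gammaBar (d m : ℕ) (hd : 1 ≤ d) (hm : m ≤ 1) (α : ℝ)
    (hα₁ : 4 / (d : ℝ) ≤ α) (hα₂ : 3 ≤ d + m → α < 4 / ((d : ℝ) + m - 2))
    (ω : ℝ) (hω : 0 < ω) :
    (∀ u : Pt d m → ℂ, Iw d m α ω u = ω / 2 * Mass d m u + gradYsq d m u / 2
        + (α * d - 4) / (4 * (α + 2)) * Pot d m α u) ∧
    gamma d m α ω
      = sInf (Iw d m α ω '' {u | InH1 d m α u ∧ u ≠ 0 ∧ Kw d m α u ≤ 0}) := by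
  have hdR : (0:ℝ) < d := by exact_mod_cast Nat.lt_of_lt_of_le Nat.zero_lt_one hd
  have hα0 : 0 < α := lt_of_lt_of_le (div_pos (by norm_num) hdR) hα₁
  have hα2 : (0:ℝ) < α + 2 := by linarith
  constructor
  · intro u; exact Iw_eq hα2.ne' ω u
  · rw [gamma]
    set T : Set ℝ := gammaSet d m α ω with hT
    set T' : Set ℝ := Iw d m α ω '' {u | InH1 d m α u ∧ u ≠ 0 ∧ Kw d m α u ≤ 0} with hT'
    have hsub : T ⊆ T' := by
      rintro a ⟨u, ⟨h1, h2, h3⟩, rfl⟩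
      exact ⟨u, ⟨h1, h2, le_of_eq h3⟩, by rw [Iw, h3]; ring⟩
    have hBl : ∀ a ∈ T', ∃ b ∈ T, b ≤ a := by
      rintro a ⟨u, ⟨h1, h2, h3⟩, rfl⟩
      obtain ⟨w, hw1, hw2, hw3, hw4⟩ := exists_K_zero hd hm hα₁ hω u h1 h2 h3
      exact ⟨Sw d m α ω w, ⟨w, ⟨hw1, hw2, hw3⟩, rfl⟩, hw4⟩
    rcases Set.eq_empty_or_nonempty T with hTe | hTne
    · have hT'e : T' = ∅ := by
        rw [Set.eq_empty_iff_forall_notMem]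
        intro a ha
        obtain ⟨b, hb, _⟩ := hBl a ha
        rw [hTe] at hb
        exact hb
      rw [hTe, hT'e]
    · have hT'ne : T'.Nonempty := hTne.mono hsub
      by_cases hbdd : BddBelow T
      · have hbdd' : BddBelow T' := by
          obtain ⟨x, hx⟩ := hbdd
          refine ⟨x, fun a ha => ?_⟩
          obtain ⟨b, hb, hba⟩ := hBl a ha
          exact le_trans (hx hb) hba
        apply le_antisymm
        · refine le_csInf hT'ne fun a ha => ?_
          obtain ⟨b, hb, hba⟩ := hBl a ha
          exact le_trans (csInf_le hbdd hb) hba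
        · exact csInf_le_csInf hbdd' hTne hsub
      · have hbdd' : ¬ BddBelow T' := fun h => hbdd (BddBelow.mono hsub h)
        rw [Real.sInf_of_not_bddBelow hbdd, Real.sInf_of_not_bddBelow hbdd']

end NLS
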